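/- Every uniformly convex Banach space has the Banach–Saks property: every weakly convergent sequence admits a subsequence whose Cesàro means converge in norm to the weak limit. -/

import Mathlib

open Filter

section BanachSaksAux

variable {X : Type*} [NormedAddCommGroup X] [NormedSpace ℝ X]

/-- The dyadic block property: all aligned blocks of size `2^l`, `l ≤ k`, of the
subsequence `v ∘ β` have sums of norm at most `(2*r)^l`. -/
def BSBlockProp (r : ℝ) (v : ℕ → X) (k : ℕ) (β : ℕ → ℕ) : Prop :=
  ∀ l ≤ k, ∀ m, ‖∑ i ∈ Finset.range (2 ^ l), v (β (m * 2 ^ l + i))‖ ≤ (2 * r) ^ l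

/-- From uniform convexity, a uniform "pairing gain" constant `r < 1`. -/
lemma bs_exists_good_r
    (huc : ∀ ε ∈ Set.Ioo (0:ℝ) 1, ∃ δ ∈ Set.Ioo (0:ℝ) 1, ∀ x y : X,
      ‖x‖ ≤ 1 → ‖y‖ ≤ 1 → ε < ‖x - y‖ → ‖x + y‖ < 2 - δ) :
    ∃ r : ℝ, 3/4 ≤ r ∧ r < 1 ∧ ∀ y : ℕ → X, (∀ n, ‖y n‖ ≤ 1) →
      (∀ f : X →L[ℝ] ℝ, Tendsto (fun n => f (y n)) atTop (nhds 0)) →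
      ∀ n, ∃ m, n < m ∧ ‖y n + y m‖ ≤ 2 * r := by
  obtain ⟨δ, ⟨hδ0, hδ1⟩, H⟩ := huc (3/8) ⟨by norm_num, by norm_num⟩
  refine ⟨max (3/4) (1 - δ/2), le_max_left _ _, max_lt (by norm_num) (by linarith), ?_⟩
  intro y hy hyw n
  set r := max (3/4 : ℝ) (1 - δ/2) with hrdef
  have hr34 : (3/4 : ℝ) ≤ r := le_max_left _ _
  have hrδ : 1 - δ/2 ≤ r := le_max_right _ _
  by_cases h : ‖y n‖ ≤ 1/2
  · refine ⟨n + 1, n.lt_succ_self, ?_⟩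
    calc ‖y n + y (n+1)‖ ≤ ‖y n‖ + ‖y (n+1)‖ := norm_add_le _ _
      _ ≤ 1/2 + 1 := add_le_add h (hy _)
      _ ≤ 2 * r := by linarith
  · push_neg at h
    have hne : y n ≠ 0 := by
      intro h0
      rw [h0, norm_zero] at h; linarith
    obtain ⟨f, hf1, hfx⟩ := exists_dual_vector ℝ (y n) (norm_ne_zero_iff.mpr hne)
    have hfx' : f (y n) = ‖y n‖ := by exact_mod_cast hfx
    have hev : ∀ᶠ m in atTop, f (y m) ∈ Set.Ioo (-(1/16) : ℝ) (1/16) :=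
      (hyw f).eventually (Ioo_mem_nhds (by norm_num) (by norm_num))
    obtain ⟨m, ⟨hm1, hm2⟩, hmn⟩ := (hev.and (eventually_gt_atTop n)).exists
    have hsub : f (y n) - f (y m) ≤ ‖y n - y m‖ := by
      have h1 : f (y n - y m) ≤ ‖f (y n - y m)‖ := le_abs_self _
      have h2 : ‖f (y n - y m)‖ ≤ ‖f‖ * ‖y n - y m‖ := f.le_opNorm _
      rw [hf1, one_mul] at h2
      simpa [map_sub] using h1.trans h2
    have hlt : (3/8 : ℝ) < ‖y n - y m‖ := by
      rw [hfx'] at hsub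
      linarith
    have := H (y n) (y m) (hy n) (hy m) hlt
    exact ⟨m, hmn, by linarith⟩

/-- One step of the extraction: given a subsequence whose blocks up to level `k` are
good, reselect (keeping the first `2^k` entries) so that blocks up to level `k+1` are good. -/
lemma bs_step {r : ℝ} (hr : 3/4 ≤ r)
    (hA : ∀ y : ℕ → X, (∀ n, ‖y n‖ ≤ 1) →
      (∀ f : X →L[ℝ] ℝ, Tendsto (fun n => f (y n)) atTop (nhds 0)) →
      ∀ n, ∃ m, n < m ∧ ‖y n + y m‖ ≤ 2 * r)
    (v : ℕ → X) (hvw : ∀ f : X →L[ℝ] ℝ, Tendsto (fun n => f (v n)) atTop (nhds 0))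
    (k : ℕ) (β : ℕ → ℕ) (hβ : StrictMono β) (hP : BSBlockProp r v k β) :
    ∃ g : ℕ → ℕ, StrictMono g ∧ (∀ i < 2 ^ k, g i = i) ∧ BSBlockProp r v (k+1) (β ∘ g) := by
  have h2k : 0 < 2 ^ k := Nat.pow_pos (by norm_num)
  set c : ℝ := (2 * r) ^ k with hcdef
  have hc : 0 < c := pow_pos (by linarith) k
  set Y : ℕ → X := fun j => ∑ i ∈ Finset.range (2 ^ k), v (β (j * 2 ^ k + i)) with hYdef
  have hYle : ∀ j, ‖Y j‖ ≤ c := fun j => hP k le_rfl j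
  set y : ℕ → X := fun j => c⁻¹ • Y j with hydef
  have hy1 : ∀ j, ‖y j‖ ≤ 1 := by
    intro j
    rw [hydef]
    simp only [norm_smul, norm_inv, Real.norm_eq_abs, abs_of_pos hc]
    calc c⁻¹ * ‖Y j‖ ≤ c⁻¹ * c :=
          mul_le_mul_of_nonneg_left (hYle j) (inv_nonneg.mpr hc.le)
      _ = 1 := inv_mul_cancel₀ hc.ne'
  have hyw : ∀ f : X →L[ℝ] ℝ, Tendsto (fun j => f (y j)) atTop (nhds 0) := by
    intro f
    have hsum : Tendsto (fun j => f (Y j)) atTop (nhds 0) := by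
      have heq : (fun j => f (Y j)) =
          fun j => ∑ i ∈ Finset.range (2 ^ k), f (v (β (j * 2 ^ k + i))) := by
        funext j; simp [hYdef, map_sum]
      rw [heq]
      have h0 : (0 : ℝ) = ∑ _i ∈ Finset.range (2 ^ k), (0 : ℝ) := by simp
      rw [h0]
      apply tendsto_finset_sum
      intro i _
      have hmono : StrictMono (fun j : ℕ => j * 2 ^ k + i) := by
        intro a b hab
        have := (Nat.mul_lt_mul_right h2k).mpr hab
        show a * 2 ^ k + i < b * 2 ^ k + i
        omega
      exact (hvw f).comp ((hβ.comp hmono).tendsto_atTop)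
    have heq : (fun j => f (y j)) = fun j => c⁻¹ * f (Y j) := by
      funext j; simp [hydef, map_smul]
    rw [heq]
    simpa using hsum.const_mul c⁻¹
  choose M hMlt hMle using hA y hy1 hyw
  set a : ℕ → ℕ := fun j => Nat.rec 0 (fun _ aj => M aj + 1) j with hadef
  have ha0 : a 0 = 0 := rfl
  have haS : ∀ j, a (j + 1) = M (a j) + 1 := fun j => rfl
  set σ : ℕ → ℕ := fun t => if t % 2 = 0 then a (t / 2) else M (a (t / 2)) with hσdef
  have hσ0 : σ 0 = 0 := rfl
  have hσmono : StrictMono σ := by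
    apply strictMono_nat_of_lt_succ
    intro t
    rcases Nat.even_or_odd t with ⟨u, hu⟩ | ⟨u, hu⟩
    · have h1 : t % 2 = 0 := by omega
      have h2 : (t + 1) % 2 = 1 := by omega
      have h3 : (t + 1) / 2 = t / 2 := by omega
      simp only [hσdef]
      rw [if_pos h1, if_neg (by omega), h3]
      exact hMlt _
    · have h1 : t % 2 = 1 := by omega
      have h2 : (t + 1) % 2 = 0 := by omega
      have h3 : (t + 1) / 2 = t / 2 + 1 := by omega
      simp only [hσdef]
      rw [if_neg (by omega), if_pos h2, h3, haS]
      exact Nat.lt_succ_self _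
  set g : ℕ → ℕ := fun t => σ (t / 2 ^ k) * 2 ^ k + t % 2 ^ k with hgdef
  have hgmono : StrictMono g := by
    intro t t' htt'
    by_cases hq : t / 2 ^ k = t' / 2 ^ k
    · have hmod : t % 2 ^ k < t' % 2 ^ k := by
        have e1 : 2 ^ k * (t / 2 ^ k) + t % 2 ^ k = t := Nat.div_add_mod t (2 ^ k)
        have e2 : 2 ^ k * (t' / 2 ^ k) + t' % 2 ^ k = t' := Nat.div_add_mod t' (2 ^ k)
        have e3 : 2 ^ k * (t / 2 ^ k) = 2 ^ k * (t' / 2 ^ k) := by rw [hq]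
        omega
      simp only [hgdef, hq]
      omega
    · have hqlt : t / 2 ^ k < t' / 2 ^ k :=
        lt_of_le_of_ne (Nat.div_le_div_right htt'.le) hq
      have hσlt : σ (t / 2 ^ k) < σ (t' / 2 ^ k) := hσmono hqlt
      have h1 : t % 2 ^ k < 2 ^ k := Nat.mod_lt _ h2k
      calc g t < (σ (t / 2 ^ k) + 1) * 2 ^ k := by
            simp only [hgdef]; rw [Nat.succ_mul]; omega
        _ ≤ σ (t' / 2 ^ k) * 2 ^ k := Nat.mul_le_mul_right _ hσlt
        _ ≤ g t' := Nat.le_add_right _ _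
  have hgid : ∀ i < 2 ^ k, g i = i := by
    intro i hi
    simp [hgdef, Nat.div_eq_of_lt hi, Nat.mod_eq_of_lt hi, hσ0]
  have hgcomp : ∀ q i, i < 2 ^ k → g (q * 2 ^ k + i) = σ q * 2 ^ k + i := by
    intro q i hi
    have e0 : q * 2 ^ k + i = i + 2 ^ k * q := by ring
    have ediv : (q * 2 ^ k + i) / 2 ^ k = q := by
      rw [e0, Nat.add_mul_div_left _ _ h2k, Nat.div_eq_of_lt hi, Nat.zero_add]
    have emod : (q * 2 ^ k + i) % 2 ^ k = i := by
      rw [e0, Nat.add_mul_mod_self_left, Nat.mod_eq_of_lt hi]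
    simp only [hgdef]
    rw [ediv, emod]
  refine ⟨g, hgmono, hgid, ?_⟩
  intro l hl m
  by_cases hlk : l ≤ k
  · -- lower levels: blocks of `β ∘ g` are blocks of `β`
    set q := m * 2 ^ l / 2 ^ k with hqdef
    set s := m * 2 ^ l % 2 ^ k with hsdef
    have h2l : 0 < 2 ^ l := Nat.pow_pos (by norm_num)
    have hqs : 2 ^ k * q + s = m * 2 ^ l := Nat.div_add_mod (m * 2 ^ l) (2 ^ k)
    have hdvd : 2 ^ l ∣ s := by
      have h1 : 2 ^ l ∣ m * 2 ^ l := dvd_mul_left _ _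
      have h2 : 2 ^ l ∣ 2 ^ k * q := ((pow_dvd_pow 2 hlk).mul_right q)
      have h3 : s = m * 2 ^ l - 2 ^ k * q := by omega
      rw [h3]; exact Nat.dvd_sub h1 h2
    obtain ⟨d, hd⟩ := hdvd
    have hslt : s < 2 ^ k := Nat.mod_lt _ h2k
    have hkl : 2 ^ k = 2 ^ l * 2 ^ (k - l) := by
      rw [← pow_add]; congr 1; omega
    have hdlt : d < 2 ^ (k - l) := by
      by_contra hcon
      push_neg at hcon
      have : 2 ^ k ≤ s := by
        rw [hd, hkl]; exact Nat.mul_le_mul_left _ hcon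
      omega
    have hkey : ∀ i < 2 ^ l,
        g (m * 2 ^ l + i) = (σ q * 2 ^ (k - l) + d) * 2 ^ l + i := by
      intro i hi
      have h1 : m * 2 ^ l + i = q * 2 ^ k + (s + i) := by
        have hqs' : q * 2 ^ k + s = m * 2 ^ l := by rw [Nat.mul_comm] at hqs; exact hqs
        omega
      have h2 : s + i < 2 ^ k := by
        have : s + i < 2 ^ l * d + 2 ^ l := by omega
        have h4 : 2 ^ l * d + 2 ^ l = 2 ^ l * (d + 1) := by ring
        have h5 : 2 ^ l * (d + 1) ≤ 2 ^ l * 2 ^ (k - l) := Nat.mul_le_mul_left _ hdlt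
        omega
      rw [h1, hgcomp q (s + i) h2]
      rw [hd]
      have : σ q * 2 ^ k = σ q * 2 ^ (k - l) * 2 ^ l := by rw [hkl]; ring
      rw [this]; ring
    calc ‖∑ i ∈ Finset.range (2 ^ l), v ((β ∘ g) (m * 2 ^ l + i))‖
        = ‖∑ i ∈ Finset.range (2 ^ l), v (β ((σ q * 2 ^ (k - l) + d) * 2 ^ l + i))‖ := by
          congr 1
          refine Finset.sum_congr rfl fun i hi => ?_
          rw [Function.comp_apply, hkey i (Finset.mem_range.mp hi)]
      _ ≤ (2 * r) ^ l := hP l hlk _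
  · -- top level `l = k + 1`
    have hl1 : l = k + 1 := by omega
    subst hl1
    have h2S : 2 ^ (k + 1) = 2 ^ k + 2 ^ k := by rw [pow_succ]; omega
    have hsplit : ∑ i ∈ Finset.range (2 ^ (k + 1)), v ((β ∘ g) (m * 2 ^ (k + 1) + i))
        = Y (σ (2 * m)) + Y (σ (2 * m + 1)) := by
      rw [h2S, Finset.sum_range_add]
      congr 1
      · refine Finset.sum_congr rfl fun i hi => ?_
        have hi' := Finset.mem_range.mp hi
        have e : m * (2 ^ k + 2 ^ k) + i = 2 * m * 2 ^ k + i := by ring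
        rw [Function.comp_apply, e, hgcomp (2 * m) i hi']
      · refine Finset.sum_congr rfl fun i hi => ?_
        have hi' := Finset.mem_range.mp hi
        have e : m * (2 ^ k + 2 ^ k) + (2 ^ k + i) = (2 * m + 1) * 2 ^ k + i := by ring
        rw [Function.comp_apply, e, hgcomp (2 * m + 1) i hi']
    rw [hsplit]
    have e1 : σ (2 * m) = a m := by
      have hm0 : 2 * m % 2 = 0 := by omega
      have hm1 : 2 * m / 2 = m := by omega
      simp only [hσdef]; rw [if_pos hm0, hm1]
    have e2 : σ (2 * m + 1) = M (a m) := by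
      have hm0 : (2 * m + 1) % 2 = 1 := by omega
      have hm1 : (2 * m + 1) / 2 = m := by omega
      simp only [hσdef]; rw [if_neg (by omega), hm1]
    have hYy : ∀ j, Y j = c • y j := fun j => (smul_inv_smul₀ hc.ne' (Y j)).symm
    rw [e1, e2, hYy, hYy, ← smul_add, norm_smul, Real.norm_eq_abs, abs_of_pos hc]
    calc c * ‖y (a m) + y (M (a m))‖ ≤ c * (2 * r) :=
          mul_le_mul_of_nonneg_left (hMle (a m)) hc.le
      _ = (2 * r) ^ (k + 1) := by rw [pow_succ]

end BanachSaksAux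

/-- Every uniformly convex Banach space has the Banach–Saks property. -/
theorem uniformly_convex_banachSaks {X : Type*} [NormedAddCommGroup X] [NormedSpace ℝ X]
    [CompleteSpace X]
    (huc : ∀ ε ∈ Set.Ioo (0:ℝ) 1, ∃ δ ∈ Set.Ioo (0:ℝ) 1, ∀ x y : X,
      ‖x‖ ≤ 1 → ‖y‖ ≤ 1 → ε < ‖x - y‖ → ‖x + y‖ < 2 - δ)
    (x : ℕ → X) (x₀ : X)
    (hw : ∀ f : X →L[ℝ] ℝ, Tendsto (fun n => f (x n)) atTop (nhds (f x₀))) :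
    ∃ φ : ℕ → ℕ, StrictMono φ ∧
      Tendsto (fun N : ℕ => (N : ℝ)⁻¹ • ∑ i ∈ Finset.range N, x (φ i)) atTop (nhds x₀) := by
  classical
  -- the weakly null sequence `u`
  set u : ℕ → X := fun n => x n - x₀ with hudef
  have huw : ∀ f : X →L[ℝ] ℝ, Tendsto (fun n => f (u n)) atTop (nhds 0) := by
    intro f
    have h := (hw f).sub_const (f x₀)
    simp only [sub_self] at h
    have heq : (fun n => f (u n)) = fun n => f (x n) - f x₀ := by
      funext n; simp [hudef, map_sub]
    rw [heq]; exact h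
  -- boundedness of `u` via Banach–Steinhaus
  obtain ⟨C, hC0, hCb⟩ : ∃ C : ℝ, 0 < C ∧ ∀ n, ‖u n‖ ≤ C := by
    have hpt : ∀ f : StrongDual ℝ X, ∃ C, ∀ n : ℕ,
        ‖(NormedSpace.inclusionInDoubleDual ℝ X (u n)) f‖ ≤ C := by
      intro f
      have hb : BddAbove (Set.range fun n => ‖f (u n)‖) := by
        have ht : Tendsto (fun n => ‖f (u n)‖) atTop (nhds ‖(0:ℝ)‖) := (huw f).norm
        exact ht.bddAbove_range
      obtain ⟨D, hD⟩ := hb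
      exact ⟨D, fun n => by
        simpa [NormedSpace.dual_def] using hD (Set.mem_range_self n)⟩
    obtain ⟨D, hD⟩ := banach_steinhaus hpt
    refine ⟨max D 1, lt_of_lt_of_le zero_lt_one (le_max_right _ _), fun n => ?_⟩
    by_cases h0 : u n = 0
    · simp only [h0, norm_zero]
      exact le_trans zero_le_one (le_max_right _ _)
    · obtain ⟨f, hf1, hfx⟩ := exists_dual_vector ℝ (u n) (norm_ne_zero_iff.mpr h0)
      have hfx' : f (u n) = ‖u n‖ := by exact_mod_cast hfx
      have h1 : ‖u n‖ ≤ ‖f (u n)‖ := by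
        rw [hfx'] at *; exact le_abs_self _
      have h2 : ‖(NormedSpace.inclusionInDoubleDual ℝ X (u n)) f‖
          ≤ ‖NormedSpace.inclusionInDoubleDual ℝ X (u n)‖ * ‖f‖ :=
        ContinuousLinearMap.le_opNorm _ _
      rw [NormedSpace.dual_def] at h2
      calc ‖u n‖ ≤ ‖f (u n)‖ := h1
        _ ≤ ‖NormedSpace.inclusionInDoubleDual ℝ X (u n)‖ * ‖f‖ := h2
        _ = ‖NormedSpace.inclusionInDoubleDual ℝ X (u n)‖ := by rw [hf1, mul_one]
        _ ≤ D := hD n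
        _ ≤ max D 1 := le_max_left _ _
  -- the normalized sequence `v`
  set v : ℕ → X := fun n => C⁻¹ • u n with hvdef
  have hv1 : ∀ n, ‖v n‖ ≤ 1 := by
    intro n
    rw [hvdef]
    simp only [norm_smul, norm_inv, Real.norm_eq_abs, abs_of_pos hC0]
    calc C⁻¹ * ‖u n‖ ≤ C⁻¹ * C := mul_le_mul_of_nonneg_left (hCb n) (inv_nonneg.mpr hC0.le)
      _ = 1 := inv_mul_cancel₀ hC0.ne'
  have hvw : ∀ f : X →L[ℝ] ℝ, Tendsto (fun n => f (v n)) atTop (nhds 0) := by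
    intro f
    have heq : (fun n => f (v n)) = fun n => C⁻¹ * f (u n) := by
      funext n; simp [hvdef, map_smul]
    rw [heq]
    simpa using (huw f).const_mul C⁻¹
  -- the gain constant `r`
  obtain ⟨r, hr34, hr1, hA⟩ := bs_exists_good_r huc
  have h2r1 : (1:ℝ) ≤ 2 * r := by linarith
  -- iterated extraction via choice
  have step' : ∀ (k : ℕ) (β : ℕ → ℕ), ∃ g : ℕ → ℕ,
      StrictMono β → BSBlockProp r v k β →
        (StrictMono g ∧ (∀ i < 2 ^ k, g i = i) ∧ BSBlockProp r v (k+1) (β ∘ g)) := by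
    intro k β
    by_cases h : StrictMono β ∧ BSBlockProp r v k β
    · obtain ⟨g, h1, h2, h3⟩ := bs_step hr34 hA v hvw k β h.1 h.2
      exact ⟨g, fun _ _ => ⟨h1, h2, h3⟩⟩
    · exact ⟨id, fun h1 h2 => absurd ⟨h1, h2⟩ h⟩
  choose G hG using step'
  set B : ℕ → ℕ → ℕ := fun k => Nat.rec id (fun k Bk => Bk ∘ G k Bk) k with hBdef
  have hBsucc : ∀ k, B (k+1) = B k ∘ G k (B k) := fun k => rfl
  have hInv : ∀ k, StrictMono (B k) ∧ BSBlockProp r v k (B k) := by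
    intro k
    induction k with
    | zero =>
      refine ⟨strictMono_id, ?_⟩
      intro l hl m
      have hl0 : l = 0 := by omega
      subst hl0
      simpa using (show ‖v (B 0 m)‖ ≤ 1 from hv1 m)
    | succ k ih =>
      obtain ⟨h1, h2, h3⟩ := hG k (B k) ih.1 ih.2
      rw [hBsucc]
      exact ⟨ih.1.comp h1, h3⟩
  have hBagree : ∀ k i, i < 2 ^ k → B (k+1) i = B k i := by
    intro k i hi
    rw [hBsucc, Function.comp_apply, (hG k (B k) (hInv k).1 (hInv k).2).2.1 i hi]
  have hBstable : ∀ k k', k ≤ k' → ∀ i, i < 2 ^ k → B k' i = B k i := by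
    intro k k' hkk'
    induction k', hkk' using Nat.le_induction with
    | base => intro i _; rfl
    | succ k' hkk' ih =>
      intro i hi
      have hi' : i < 2 ^ k' := lt_of_lt_of_le hi (Nat.pow_le_pow_right (by norm_num) hkk')
      rw [hBagree k' i hi', ih i hi]
  set φ : ℕ → ℕ := fun i => B i i with hφdef
  have hφeq : ∀ k i, i < 2 ^ k → φ i = B k i := by
    intro k i hi
    rcases le_total i k with h | h
    · show B i i = B k i
      exact (hBstable i k h i (i.lt_two_pow_self)).symm
    · show B i i = B k i
      rw [hBstable k i h i hi]
  have hφmono : StrictMono φ := by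
    intro i j hij
    have h1 : φ i = B j i := hφeq j i (lt_of_lt_of_le hij (j.lt_two_pow_self).le)
    have h2 : φ j = B j j := hφeq j j (j.lt_two_pow_self)
    rw [h1, h2]
    exact (hInv j).1 hij
  have hφP : ∀ l m, ‖∑ i ∈ Finset.range (2 ^ l), v (φ (m * 2 ^ l + i))‖ ≤ (2 * r) ^ l := by
    intro l m
    set k := (m + 1) * 2 ^ l with hkdef
    have h2l : 0 < 2 ^ l := Nat.pow_pos (by norm_num)
    have hk1 : l ≤ k := by
      calc l ≤ 2 ^ l := (l.lt_two_pow_self).le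
        _ ≤ (m + 1) * 2 ^ l := Nat.le_mul_of_pos_left _ m.succ_pos
    have hk2 : ∀ i, i < 2 ^ l → m * 2 ^ l + i < 2 ^ k := by
      intro i hi
      have e1 : m * 2 ^ l + i < (m + 1) * 2 ^ l := by
        have : (m + 1) * 2 ^ l = m * 2 ^ l + 2 ^ l := by ring
        omega
      exact lt_of_lt_of_le e1 (k.lt_two_pow_self).le
    have hsum : ∑ i ∈ Finset.range (2 ^ l), v (φ (m * 2 ^ l + i))
        = ∑ i ∈ Finset.range (2 ^ l), v (B k (m * 2 ^ l + i)) := by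
      refine Finset.sum_congr rfl fun i hi => ?_
      rw [hφeq k _ (hk2 i (Finset.mem_range.mp hi))]
    rw [hsum]
    exact (hInv k).2 l hk1 m
  -- Cesàro-type estimate on partial sums
  have hQ : ∀ k m N, N ≤ 2 ^ k →
      ‖∑ i ∈ Finset.range N, v (φ (m * 2 ^ k + i))‖
        ≤ ∑ j ∈ Finset.range (k + 1), (2 * r) ^ j := by
    intro k
    induction k with
    | zero =>
      intro m N hN
      interval_cases N
      · simp
      · simpa using hv1 (φ m)
    | succ k ih =>
      intro m N hN
      by_cases h : N ≤ 2 ^ k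
      · have hsum : ∑ i ∈ Finset.range N, v (φ (m * 2 ^ (k+1) + i))
            = ∑ i ∈ Finset.range N, v (φ (2 * m * 2 ^ k + i)) := by
          refine Finset.sum_congr rfl fun i _ => ?_
          congr 2
          rw [pow_succ]; ring
        rw [hsum]
        refine le_trans (ih (2 * m) N h) ?_
        refine Finset.sum_le_sum_of_subset_of_nonneg ?_ ?_
        · exact Finset.range_subset_range.mpr (by omega)
        · intro j _ _; positivity
      · push_neg at h
        obtain ⟨N', rfl⟩ : ∃ N', N = 2 ^ k + N' := ⟨N - 2 ^ k, by omega⟩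
        have hN' : N' ≤ 2 ^ k := by
          have : 2 ^ (k+1) = 2 ^ k + 2 ^ k := by rw [pow_succ]; omega
          omega
        rw [Finset.sum_range_add]
        have e1 : ∑ i ∈ Finset.range (2 ^ k), v (φ (m * 2 ^ (k+1) + i))
            = ∑ i ∈ Finset.range (2 ^ k), v (φ (2 * m * 2 ^ k + i)) := by
          refine Finset.sum_congr rfl fun i _ => ?_
          congr 2
          rw [pow_succ]; ring
        have e2 : ∑ i ∈ Finset.range N', v (φ (m * 2 ^ (k+1) + (2 ^ k + i)))
            = ∑ i ∈ Finset.range N', v (φ ((2 * m + 1) * 2 ^ k + i)) := by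
          refine Finset.sum_congr rfl fun i _ => ?_
          congr 2
          rw [pow_succ]; ring
        calc ‖(∑ i ∈ Finset.range (2 ^ k), v (φ (m * 2 ^ (k+1) + i)))
              + ∑ i ∈ Finset.range N', v (φ (m * 2 ^ (k+1) + (2 ^ k + i)))‖
            ≤ ‖∑ i ∈ Finset.range (2 ^ k), v (φ (m * 2 ^ (k+1) + i))‖
              + ‖∑ i ∈ Finset.range N', v (φ (m * 2 ^ (k+1) + (2 ^ k + i)))‖ :=
              norm_add_le _ _
          _ ≤ (2 * r) ^ k + ∑ j ∈ Finset.range (k + 1), (2 * r) ^ j := by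
              refine add_le_add ?_ ?_
              · rw [e1]; exact hφP k (2 * m)
              · rw [e2]; exact ih (2 * m + 1) N' hN'
          _ ≤ (2 * r) ^ (k+1) + ∑ j ∈ Finset.range (k + 1), (2 * r) ^ j := by
              have : (2 * r) ^ k ≤ (2 * r) ^ (k+1) :=
                pow_le_pow_right₀ h2r1 (Nat.le_succ k)
              linarith
          _ = ∑ j ∈ Finset.range (k + 1 + 1), (2 * r) ^ j := by
              rw [Finset.sum_range_succ (fun j => (2 * r) ^ j) (k + 1)]; ring
  -- the quantitative bound on the means
  have hbound : ∀ N : ℕ, 2 ≤ N →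
      ‖(N : ℝ)⁻¹ • ∑ i ∈ Finset.range N, x (φ i) - x₀‖
        ≤ C * (2 * (Nat.clog 2 N + 1) * r ^ Nat.clog 2 N) := by
    intro N hN
    set k := Nat.clog 2 N with hkdef
    have hk1 : 1 ≤ k := Nat.clog_pos one_lt_two (by omega)
    have hkN : N ≤ 2 ^ k := Nat.le_pow_clog one_lt_two N
    have hkN2 : 2 ^ (k - 1) < N := by
      have := Nat.pow_pred_clog_lt_self one_lt_two (x := N) (by omega)
      simpa [Nat.pred_eq_sub_one] using this
    -- mean of x minus x₀ equals C • mean of v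
    have hxv : ∀ i : ℕ, x (φ i) = x₀ + C • v (φ i) := by
      intro i
      simp only [hvdef, hudef, smul_smul, mul_inv_cancel₀ hC0.ne', one_smul]
      abel
    have hsum : ∑ i ∈ Finset.range N, x (φ i)
        = N • x₀ + C • ∑ i ∈ Finset.range N, v (φ i) := by
      rw [Finset.sum_congr rfl (fun i _ => hxv i), Finset.sum_add_distrib,
        Finset.sum_const, Finset.card_range, ← Finset.smul_sum]
    have hNpos : (0:ℝ) < (N:ℝ) := by positivity
    have hmean : (N : ℝ)⁻¹ • ∑ i ∈ Finset.range N, x (φ i) - x₀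
        = C • ((N : ℝ)⁻¹ • ∑ i ∈ Finset.range N, v (φ i)) := by
      rw [hsum, smul_add]
      have h1 : (N : ℝ)⁻¹ • (N • x₀) = x₀ := by
        rw [← Nat.cast_smul_eq_nsmul ℝ, smul_smul, inv_mul_cancel₀ hNpos.ne', one_smul]
      rw [h1, smul_comm]
      abel
    rw [hmean]
    -- now estimate
    have hQ' : ‖∑ i ∈ Finset.range N, v (φ i)‖ ≤ (k + 1) * (2 * r) ^ k := by
      have h0 := hQ k 0 N hkN
      simp only [Nat.zero_mul, Nat.zero_add] at h0
      refine le_trans h0 ?_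
      calc ∑ j ∈ Finset.range (k + 1), (2 * r) ^ j
          ≤ ∑ _j ∈ Finset.range (k + 1), (2 * r) ^ k := by
            refine Finset.sum_le_sum fun j hj => ?_
            have hj' := Finset.mem_range.mp hj
            exact pow_le_pow_right₀ h2r1 (by omega)
        _ = (k + 1) * (2 * r) ^ k := by
            rw [Finset.sum_const, Finset.card_range, nsmul_eq_mul]
            push_cast; ring
    rw [norm_smul, norm_smul, Real.norm_eq_abs, abs_of_pos hC0, Real.norm_eq_abs,
      abs_of_pos (inv_pos.mpr hNpos)]
    have hNinv : (N:ℝ)⁻¹ ≤ ((2:ℝ) ^ (k-1))⁻¹ := by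
      apply inv_anti₀
      · positivity
      · have : ((2:ℝ) ^ (k-1)) < (N:ℝ) := by exact_mod_cast hkN2
        linarith
    have hfinal : ((2:ℝ) ^ (k-1))⁻¹ * ((k + 1) * (2 * r) ^ k)
        = 2 * (k + 1) * r ^ k := by
      have h2k : (2:ℝ) ^ k = 2 * 2 ^ (k - 1) := by
        rw [← pow_succ']
        congr 1
        omega
      rw [mul_pow, h2k]
      have hne : ((2:ℝ) ^ (k-1)) ≠ 0 := by positivity
      field_simp
    calc C * ((N:ℝ)⁻¹ * ‖∑ i ∈ Finset.range N, v (φ i)‖)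
        ≤ C * (((2:ℝ) ^ (k-1))⁻¹ * ((k + 1) * (2 * r) ^ k)) := by
          refine mul_le_mul_of_nonneg_left ?_ hC0.le
          refine mul_le_mul hNinv hQ' (norm_nonneg _) (by positivity)
      _ = C * (2 * (k + 1) * r ^ k) := by rw [hfinal]
  -- the bounding sequence tends to zero
  have hlim : Tendsto (fun N : ℕ => C * (2 * (Nat.clog 2 N + 1) * r ^ Nat.clog 2 N))
      atTop (nhds 0) := by
    have habs : |r| < 1 := by rw [abs_of_pos (by linarith : (0:ℝ) < r)]; exact hr1
    have hs1 : Summable (fun n : ℕ => (n:ℝ) ^ 1 * r ^ n) :=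
      summable_pow_mul_geometric_of_norm_lt_one 1 (by rwa [Real.norm_eq_abs])
    have hs2 : Summable (fun n : ℕ => r ^ n) :=
      summable_geometric_of_lt_one (by linarith) hr1
    have hs := ((hs1.add hs2).mul_left (C * 2)).tendsto_atTop_zero
    have h1 : Tendsto (fun k : ℕ => C * (2 * ((k:ℝ) + 1) * r ^ k)) atTop (nhds 0) := by
      refine hs.congr fun k => ?_
      push_cast
      ring
    have h2 : Tendsto (fun N : ℕ => Nat.clog 2 N) atTop atTop := by
      refine tendsto_atTop_atTop.mpr fun b => ⟨2 ^ b + 1, fun N hN => ?_⟩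
      have := (Nat.lt_clog_iff_pow_lt one_lt_two).mpr (by omega : 2 ^ b < N)
      omega
    exact h1.comp h2
  -- conclude
  refine ⟨φ, hφmono, ?_⟩
  have hnorm : Tendsto
      (fun N : ℕ => ‖(N : ℝ)⁻¹ • ∑ i ∈ Finset.range N, x (φ i) - x₀‖) atTop (nhds 0) := by
    refine squeeze_zero' (Eventually.of_forall fun N => norm_nonneg _) ?_ hlim
    exact eventually_atTop.mpr ⟨2, hbound⟩
  have h0 : Tendsto (fun N : ℕ => (N : ℝ)⁻¹ • ∑ i ∈ Finset.range N, x (φ i) - x₀)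
      atTop (nhds 0) := tendsto_zero_iff_norm_tendsto_zero.mpr hnorm
  have := h0.add_const x₀
  simpa using this
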